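/- arXiv:1904.08407 — 3 statements merged into one kernel-verified Lean document; each statement's English description precedes it below -/
import Mathlib

section
/- Self-improvement of time-backwards ADR: if Σ is ADR with constant M₀ and time-backwards ADR on Δ_r = Σ ∩ Q_r(x₀,t₀) with constant c₀ (i.e., c₀ ρ^{n+1} ≤ σ(Q⁻_ρ(x,t) ∩ Σ) for all Q_ρ ⊆ Q_r centered at points of Σ), then there exist constants a ∈ (0,1) and c₁ > 0, depending only on n, M₀, c₀, such that c₁ r^{n+1} ≤ σ(Δ⁻_r ∩ {(y,s) : s < t₀ - (a r)²}), where Δ⁻_r = Q⁻_r(x₀,t₀) ∩ Σ. -/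
open MeasureTheory Set
open scoped ENNReal

/-- The open parabolic cube of parabolic sidelength `r` centered at `x`. -/
def pQ {n : ℕ} (x : EuclideanSpace ℝ (Fin n) × ℝ) (r : ℝ) :
    Set (EuclideanSpace ℝ (Fin n) × ℝ) :=
  {q | (∀ i, |x.1 i - q.1 i| < r) ∧ |x.2 - q.2| < r ^ 2}

/-- The time-backward half `Q⁻_r(x,t)` of the parabolic cube `Q_r(x,t)`. -/
def pQminus {n : ℕ} (x : EuclideanSpace ℝ (Fin n) × ℝ) (r : ℝ) :
    Set (EuclideanSpace ℝ (Fin n) × ℝ) :=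
  {q | (∀ i, |x.1 i - q.1 i| < r) ∧ x.2 - r ^ 2 < q.2 ∧ q.2 < x.2}

/-- Grid cell of mesh `h` indexed by `k`, relative to the center `x₀`. -/
def TBcell {n : ℕ} (x₀ : EuclideanSpace ℝ (Fin n) × ℝ) (h : ℝ) (k : Fin n → ℤ) :
    Set (EuclideanSpace ℝ (Fin n) × ℝ) :=
  {q | ∀ i, (k i : ℝ) * h ≤ q.1 i - x₀.1 i ∧ q.1 i - x₀.1 i < ((k i : ℝ) + 1) * h}

lemma TB_pQ_mono {n : ℕ} (x : EuclideanSpace ℝ (Fin n) × ℝ) {r₁ r₂ : ℝ}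
    (h0 : 0 ≤ r₁) (h : r₁ ≤ r₂) : pQ x r₁ ⊆ pQ x r₂ := by
  rintro q ⟨h1, h2⟩
  exact ⟨fun i => (h1 i).trans_le h, h2.trans_le (by nlinarith)⟩

lemma TB_pQminus_mono {n : ℕ} (x : EuclideanSpace ℝ (Fin n) × ℝ) {r₁ r₂ : ℝ}
    (h0 : 0 ≤ r₁) (h : r₁ ≤ r₂) : pQminus x r₁ ⊆ pQminus x r₂ := by
  rintro q ⟨h1, h2, h3⟩
  refine ⟨fun i => (h1 i).trans_le h, ?_, h3⟩
  nlinarith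

/-- Every point at spatial distance `< r/2` from the center lies in one of the grid
cells indexed by `Icc (-⌈(2a)⁻¹⌉) ⌈(2a)⁻¹⌉`. -/
lemma TB_cells_cover {n : ℕ} (x₀ q : EuclideanSpace ℝ (Fin n) × ℝ) (a r : ℝ)
    (ha : 0 < a) (hr : 0 < r) (hq : ∀ i, |x₀.1 i - q.1 i| < r / 2) :
    ∃ k : Fin n → ℤ, (∀ i, k i ∈ Finset.Icc (-⌈(2 * a)⁻¹⌉) ⌈(2 * a)⁻¹⌉) ∧
      q ∈ TBcell x₀ (a * r) k := by
  have hh : 0 < a * r := by positivity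
  refine ⟨fun i => ⌊(q.1 i - x₀.1 i) / (a * r)⌋, fun i => ?_, fun i => ?_⟩
  · beta_reduce
    have habs := abs_lt.1 (hq i)
    have hub : (q.1 i - x₀.1 i) / (a * r) < (2 * a)⁻¹ := by
      rw [div_lt_iff₀ hh]
      have he : (2 * a)⁻¹ * (a * r) = r / 2 := by field_simp
      rw [he]; linarith
    have hlb : -((2 * a)⁻¹) < (q.1 i - x₀.1 i) / (a * r) := by
      rw [lt_div_iff₀ hh]
      have he : -((2 * a)⁻¹) * (a * r) = -(r / 2) := by field_simp
      rw [he]; linarith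
    have hf1 : (⌊(q.1 i - x₀.1 i) / (a * r)⌋ : ℝ) ≤ (q.1 i - x₀.1 i) / (a * r) :=
      Int.floor_le _
    have hf2 : (q.1 i - x₀.1 i) / (a * r) < (⌊(q.1 i - x₀.1 i) / (a * r)⌋ : ℝ) + 1 :=
      Int.lt_floor_add_one _
    have hKz : ((2 * a)⁻¹ : ℝ) ≤ (⌈(2 * a)⁻¹⌉ : ℝ) := Int.le_ceil _
    rw [Finset.mem_Icc]
    constructor
    · have hcast : ((-⌈(2 * a)⁻¹⌉ : ℤ) : ℝ) - 1 < (⌊(q.1 i - x₀.1 i) / (a * r)⌋ : ℝ) := by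
        push_cast; linarith
      have : (-⌈(2 * a)⁻¹⌉ : ℤ) - 1 < ⌊(q.1 i - x₀.1 i) / (a * r)⌋ := by exact_mod_cast hcast
      omega
    · have hcast : (⌊(q.1 i - x₀.1 i) / (a * r)⌋ : ℝ) < (⌈(2 * a)⁻¹⌉ : ℝ) + 1 := by
        linarith
      have : ⌊(q.1 i - x₀.1 i) / (a * r)⌋ < ⌈(2 * a)⁻¹⌉ + 1 := by exact_mod_cast hcast
      omega
  · beta_reduce
    constructor
    · have h1 := Int.floor_le ((q.1 i - x₀.1 i) / (a * r))
      calc (⌊(q.1 i - x₀.1 i) / (a * r)⌋ : ℝ) * (a * r)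
          ≤ (q.1 i - x₀.1 i) / (a * r) * (a * r) := mul_le_mul_of_nonneg_right h1 hh.le
        _ = q.1 i - x₀.1 i := by field_simp
    · have h1 := Int.lt_floor_add_one ((q.1 i - x₀.1 i) / (a * r))
      calc q.1 i - x₀.1 i = (q.1 i - x₀.1 i) / (a * r) * (a * r) := by field_simp
        _ < ((⌊(q.1 i - x₀.1 i) / (a * r)⌋ : ℝ) + 1) * (a * r) :=
            mul_lt_mul_of_pos_right h1 hh

/-- Two slab points in the same grid cell are in a common small parabolic cube. -/
lemma TB_cell_to_cube {n : ℕ} (x₀ y q : EuclideanSpace ℝ (Fin n) × ℝ) (a r : ℝ)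
    (ha : 0 < a) (hr : 0 < r) (k : Fin n → ℤ)
    (hy : y ∈ pQminus x₀ (r / 2)) (hyt : x₀.2 - (a * r) ^ 2 ≤ y.2)
    (hq : q ∈ pQminus x₀ (r / 2)) (hqt : x₀.2 - (a * r) ^ 2 ≤ q.2)
    (hyc : y ∈ TBcell x₀ (a * r) k) (hqc : q ∈ TBcell x₀ (a * r) k) :
    q ∈ pQ y (3 * (a * r)) := by
  have hh : 0 < a * r := by positivity
  constructor
  · intro i
    have h1 := hyc i
    have h2 := hqc i
    rw [abs_lt]
    constructor <;> nlinarith [h1.1, h1.2, h2.1, h2.2]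
  · have h1 : y.2 < x₀.2 := hy.2.2
    have h2 : q.2 < x₀.2 := hq.2.2
    rw [abs_lt]
    constructor <;> nlinarith

/-- The small cube around a slab point is contained in the big cube. -/
lemma TB_cube_in_big {n : ℕ} (x₀ y : EuclideanSpace ℝ (Fin n) × ℝ) (a r : ℝ)
    (ha : 0 < a) (ha6 : a ≤ 6⁻¹) (hr : 0 < r) (hy : y ∈ pQminus x₀ (r / 2)) :
    pQ y (3 * (a * r)) ⊆ pQ x₀ r := by
  have h3ar : 3 * (a * r) ≤ r / 2 := by nlinarith
  rintro z ⟨hz1, hz2⟩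
  constructor
  · intro i
    have t1 := hy.1 i
    have t2 := hz1 i
    have t3 := abs_sub_le (x₀.1 i) (y.1 i) (z.1 i)
    linarith
  · have t1 : |x₀.2 - y.2| < (r / 2) ^ 2 := by
      rw [abs_lt]
      have u1 := hy.2.1
      have u2 := hy.2.2
      constructor <;> nlinarith
    have t3 := abs_sub_le x₀.2 y.2 z.2
    have t4 : (3 * (a * r)) ^ 2 ≤ (r / 2) ^ 2 :=
      pow_le_pow_left₀ (by positivity) h3ar 2
    have t2 := abs_lt.1 hz2
    have t1' := abs_lt.1 t1
    rw [abs_lt]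
    have hr2 : 0 < r ^ 2 := by positivity
    constructor <;> nlinarith

/-- Cardinality of the index grid. -/
lemma TB_card_bound (n : ℕ) (a : ℝ) (ha : 0 < a) (ha6 : a ≤ 6⁻¹) :
    (((Fintype.piFinset fun _ : Fin n =>
        Finset.Icc (-⌈(2 * a)⁻¹⌉) ⌈(2 * a)⁻¹⌉).card) : ℝ) ≤ (2 / a) ^ n := by
  set Kz : ℤ := ⌈(2 * a)⁻¹⌉ with hKz_def
  have hKz0 : 0 ≤ Kz := Int.ceil_nonneg (by positivity)
  have hKzlt : (Kz : ℝ) < (2 * a)⁻¹ + 1 := Int.ceil_lt_add_one _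
  have h1 : (Fintype.piFinset fun _ : Fin n => Finset.Icc (-Kz) Kz).card
      = ((2 * Kz + 1).toNat) ^ n := by
    rw [Fintype.card_piFinset]
    simp only [Finset.prod_const, Finset.card_univ, Fintype.card_fin, Int.card_Icc]
    congr 1
    omega
  have h2 : (((2 * Kz + 1).toNat : ℤ) : ℝ) = 2 * (Kz : ℝ) + 1 := by
    have he : ((2 * Kz + 1).toNat : ℤ) = 2 * Kz + 1 := Int.toNat_of_nonneg (by omega)
    rw [he]; push_cast; ring
  have h3 : ((2 * Kz + 1).toNat : ℝ) ≤ 2 / a := by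
    have hc : ((2 * Kz + 1).toNat : ℝ) = 2 * (Kz : ℝ) + 1 := by exact_mod_cast h2
    rw [hc]
    have hai : (6 : ℝ) ≤ a⁻¹ := by
      rw [show (6:ℝ) = (6⁻¹)⁻¹ by norm_num]
      exact inv_anti₀ ha ha6
    have hm : (2 * a)⁻¹ = a⁻¹ / 2 := by rw [mul_inv]; ring
    rw [hm] at hKzlt
    have hd : 2 / a = 2 * a⁻¹ := by ring
    rw [hd]
    linarith
  rw [h1]
  push_cast
  exact pow_le_pow_left₀ (by positivity) h3 n

lemma TB_geom_eq (n : ℕ) (M₀ a r : ℝ) (ha : 0 < a) (hr : 0 < r) :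
    (2 / a) ^ n * (M₀ * (3 * (a * r)) ^ (n + 1)) = 3 * M₀ * 6 ^ n * a * r ^ (n + 1) := by
  rw [show (3 * (a * r)) ^ (n + 1) = 3 ^ (n + 1) * a ^ (n + 1) * r ^ (n + 1) by
    rw [mul_pow, mul_pow]; ring]
  rw [div_pow, pow_succ 3 n, pow_succ a n,
    show (6 : ℝ) ^ n = 2 ^ n * 3 ^ n by rw [← mul_pow]; norm_num]
  field_simp

lemma TB_arith_final (n : ℕ) (c₀ C a r : ℝ) (hc₀ : 0 < c₀) (hr : 0 < r)
    (haC : C * a ≤ c₀ / 2 ^ (n + 2)) :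
    c₀ / 2 ^ (n + 2) * r ^ (n + 1) + C * a * r ^ (n + 1) ≤ c₀ * (r / 2) ^ (n + 1) := by
  have hrp : 0 < r ^ (n + 1) := pow_pos hr _
  rw [div_pow r 2 (n + 1)]
  have h2 : c₀ / 2 ^ (n + 2) + C * a ≤ c₀ / 2 ^ (n + 1) := by
    have he : c₀ / 2 ^ (n + 2) + c₀ / 2 ^ (n + 2) = c₀ / 2 ^ (n + 1) := by
      rw [show (2 : ℝ) ^ (n + 2) = 2 ^ (n + 1) * 2 by rw [pow_succ]]
      field_simp; ring
    linarith
  have h3 := mul_le_mul_of_nonneg_right h2 hrp.le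
  calc c₀ / 2 ^ (n + 2) * r ^ (n + 1) + C * a * r ^ (n + 1)
      = (c₀ / 2 ^ (n + 2) + C * a) * r ^ (n + 1) := by ring
    _ ≤ c₀ / 2 ^ (n + 1) * r ^ (n + 1) := h3
    _ = c₀ * (r ^ (n + 1) / 2 ^ (n + 1)) := by ring
/-- self-improvement of time-backwards ADR.  If `Σ` is ADR with
constant `M₀` and time-backwards ADR with constant `c₀` on `Δ_r = Σ ∩ Q_r(x₀,t₀)`,
then there are `a ∈ (0,1)` and `c₁ > 0`, depending only on `n, M₀, c₀`, such that
`c₁ r^{n+1} ≤ σ(Δ⁻_r ∩ {s < t₀ - (ar)²})`. -/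
theorem TBADR_self_improvement (n : ℕ) (M₀ c₀ : ℝ) (hM₀ : 0 < M₀) (hc₀ : 0 < c₀) :
    ∃ a : ℝ, 0 < a ∧ a < 1 ∧ ∃ c₁ > (0 : ℝ),
      ∀ (S : Set (EuclideanSpace ℝ (Fin n) × ℝ))
        (σ : Measure (EuclideanSpace ℝ (Fin n) × ℝ))
        (x₀ : EuclideanSpace ℝ (Fin n) × ℝ) (r : ℝ), 0 < r → x₀ ∈ S →
        (∀ y ∈ S, ∀ ρ : ℝ, 0 < ρ → pQ y ρ ⊆ pQ x₀ r →
          ENNReal.ofReal (ρ ^ (n + 1) / M₀) ≤ σ (pQ y ρ ∩ S) ∧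
            σ (pQ y ρ ∩ S) ≤ ENNReal.ofReal (M₀ * ρ ^ (n + 1))) →
        (∀ y ∈ S, ∀ ρ : ℝ, 0 < ρ → pQ y ρ ⊆ pQ x₀ r →
          ENNReal.ofReal (c₀ * ρ ^ (n + 1)) ≤ σ (pQminus y ρ ∩ S)) →
        ENNReal.ofReal (c₁ * r ^ (n + 1)) ≤
          σ ((pQminus x₀ r ∩ S) ∩ {q | q.2 < x₀.2 - (a * r) ^ 2}) := by
  set C : ℝ := 3 * M₀ * 6 ^ n with hC_def
  have hCpos : 0 < C := by positivity
  set a : ℝ := min 6⁻¹ (c₀ / (2 ^ (n + 2) * C)) with ha_def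
  have hapos : 0 < a := lt_min (by norm_num) (by positivity)
  have ha6 : a ≤ 6⁻¹ := min_le_left _ _
  have haC : C * a ≤ c₀ / 2 ^ (n + 2) := by
    have h1 : a ≤ c₀ / (2 ^ (n + 2) * C) := min_le_right _ _
    calc C * a ≤ C * (c₀ / (2 ^ (n + 2) * C)) := mul_le_mul_of_nonneg_left h1 hCpos.le
      _ = c₀ / 2 ^ (n + 2) := by field_simp
  refine ⟨a, hapos, lt_of_le_of_lt ha6 (by norm_num),
    c₀ / 2 ^ (n + 2), by positivity, ?_⟩
  intro S σ x₀ r hr hx₀ hADR hTB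
  have hh : 0 < a * r := by positivity
  -- Lower bound on the half-radius backward cube
  have hB := hTB x₀ hx₀ (r / 2) (by positivity)
    (TB_pQ_mono x₀ (by positivity) (by linarith))
  set A : Set (EuclideanSpace ℝ (Fin n) × ℝ) :=
    (pQminus x₀ r ∩ S) ∩ {q | q.2 < x₀.2 - (a * r) ^ 2} with hA_def
  set T : Set (EuclideanSpace ℝ (Fin n) × ℝ) :=
    (pQminus x₀ (r / 2) ∩ S) ∩ {q | x₀.2 - (a * r) ^ 2 ≤ q.2} with hT_def
  have hsplit : pQminus x₀ (r / 2) ∩ S ⊆ A ∪ T := by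
    rintro q ⟨hq1, hq2⟩
    rcases lt_or_ge q.2 (x₀.2 - (a * r) ^ 2) with hlt | hle
    · exact Or.inl ⟨⟨TB_pQminus_mono x₀ (by positivity) (by linarith) hq1, hq2⟩, hlt⟩
    · exact Or.inr ⟨⟨hq1, hq2⟩, hle⟩
  have hmeas : σ (pQminus x₀ (r / 2) ∩ S) ≤ σ A + σ T :=
    (measure_mono hsplit).trans (measure_union_le _ _)
  -- Covering of the slab T by a grid of small cubes
  set I : Finset (Fin n → ℤ) :=
    Fintype.piFinset fun _ => Finset.Icc (-⌈(2 * a)⁻¹⌉) ⌈(2 * a)⁻¹⌉ with hI_def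
  have hcover : T ⊆ ⋃ k ∈ I, T ∩ TBcell x₀ (a * r) k := by
    intro q hq
    obtain ⟨k, hk1, hk2⟩ := TB_cells_cover x₀ q a r hapos hr hq.1.1.1
    exact mem_iUnion₂.2 ⟨k, Fintype.mem_piFinset.2 hk1, hq, hk2⟩
  have hcell_bound : ∀ k,
      σ (T ∩ TBcell x₀ (a * r) k) ≤ ENNReal.ofReal (M₀ * (3 * (a * r)) ^ (n + 1)) := by
    intro k
    rcases (T ∩ TBcell x₀ (a * r) k).eq_empty_or_nonempty with he | ⟨y, hy⟩
    · rw [he, measure_empty]; exact zero_le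
    · have hyS : y ∈ S := hy.1.1.2
      have hsub2 : T ∩ TBcell x₀ (a * r) k ⊆ pQ y (3 * (a * r)) ∩ S := fun q hq =>
        ⟨TB_cell_to_cube x₀ y q a r hapos hr k hy.1.1.1 hy.1.2 hq.1.1.1 hq.1.2
          hy.2 hq.2, hq.1.1.2⟩
      have hsub3 : pQ y (3 * (a * r)) ⊆ pQ x₀ r :=
        TB_cube_in_big x₀ y a r hapos ha6 hr hy.1.1.1
      exact (measure_mono hsub2).trans
        (hADR y hyS (3 * (a * r)) (by positivity) hsub3).2
  have hT : σ T ≤ ENNReal.ofReal (C * a * r ^ (n + 1)) := by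
    have hcard : (I.card : ℝ) ≤ (2 / a) ^ n := TB_card_bound n a hapos ha6
    have hsum : σ T ≤ I.card • ENNReal.ofReal (M₀ * (3 * (a * r)) ^ (n + 1)) := by
      calc σ T ≤ σ (⋃ k ∈ I, T ∩ TBcell x₀ (a * r) k) := measure_mono hcover
        _ ≤ ∑ k ∈ I, σ (T ∩ TBcell x₀ (a * r) k) := measure_biUnion_finset_le _ _
        _ ≤ ∑ _k ∈ I, ENNReal.ofReal (M₀ * (3 * (a * r)) ^ (n + 1)) :=
            Finset.sum_le_sum fun k _ => hcell_bound k
        _ = I.card • ENNReal.ofReal (M₀ * (3 * (a * r)) ^ (n + 1)) := Finset.sum_const _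
    obtain ⟨N, hN⟩ : ∃ N : ℕ, I.card = N := ⟨_, rfl⟩
    rw [hN] at hsum hcard
    refine hsum.trans ?_
    rw [nsmul_eq_mul, ← ENNReal.ofReal_natCast N,
      ← ENNReal.ofReal_mul (Nat.cast_nonneg N)]
    apply ENNReal.ofReal_le_ofReal
    calc (N : ℝ) * (M₀ * (3 * (a * r)) ^ (n + 1))
        ≤ (2 / a) ^ n * (M₀ * (3 * (a * r)) ^ (n + 1)) :=
          mul_le_mul_of_nonneg_right hcard (by positivity)
      _ = C * a * r ^ (n + 1) := TB_geom_eq n M₀ a r hapos hr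
  -- put everything together
  have key : ENNReal.ofReal (c₀ * (r / 2) ^ (n + 1)) ≤
      σ A + ENNReal.ofReal (C * a * r ^ (n + 1)) :=
    hB.trans (hmeas.trans (add_le_add_right hT _))
  have final : ENNReal.ofReal (c₀ / 2 ^ (n + 2) * r ^ (n + 1)) +
      ENNReal.ofReal (C * a * r ^ (n + 1)) ≤
      σ A + ENNReal.ofReal (C * a * r ^ (n + 1)) := by
    rw [← ENNReal.ofReal_add (by positivity) (by positivity)]
    exact (ENNReal.ofReal_le_ofReal
      (TB_arith_final n c₀ C a r hc₀ hr haC)).trans key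
  exact (ENNReal.add_le_add_iff_right ENNReal.ofReal_ne_top).mp final
end

section
/- Parabolic polar coordinates: the map (ρ, ζ, τ) ↦ (ρζ, ρ²τ) from (0,∞) × S^n (where (ζ,τ) ∈ S^n ⊂ R^n × R) to R^{n+1} \ {0} is a bijection, and for integrable f on R^{n+1}, ∬ f(X,t) dX dt = ∫_{S^n} ∫_0^∞ f(ρζ, ρ²τ) ρ^{n+1} dρ dμ(ζ,τ), where dμ(ζ,τ) = (1+τ²) dσ_{S^n}(ζ,τ). -/
open MeasureTheory Set Metric

/-- The parabolic polar coordinate map `(ρ,(ζ,τ)) ↦ (ρζ, ρ²τ)`, where a point of the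
unit sphere `S^n ⊂ ℝ^{n+1}` is written as `(ζ,τ)` with `ζ ∈ ℝ^n` the first `n`
coordinates and `τ ∈ ℝ` the last coordinate. -/
noncomputable def parPolar (n : ℕ)
    (p : ℝ × sphere (0 : EuclideanSpace ℝ (Fin (n + 1))) 1) :
    EuclideanSpace ℝ (Fin n) × ℝ :=
  ((WithLp.toLp 2 (fun i : Fin n => p.1 * (p.2 : EuclideanSpace ℝ (Fin (n + 1))) (Fin.castSucc i)) :
      EuclideanSpace ℝ (Fin n)),
    p.1 ^ 2 * (p.2 : EuclideanSpace ℝ (Fin (n + 1))) (Fin.last n))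

noncomputable section
namespace ParPolarAux

abbrev Esp (n : ℕ) := EuclideanSpace ℝ (Fin (n+1))

variable (n : ℕ)

/-! ### The coordinate-splitting map -/

def psiFun (x : Esp n) : EuclideanSpace ℝ (Fin n) × ℝ :=
  ((WithLp.toLp 2 (fun i : Fin n => (x (Fin.castSucc i) : ℝ)) : EuclideanSpace ℝ (Fin n)), x (Fin.last n))

def psiMEquiv : Esp n ≃ᵐ EuclideanSpace ℝ (Fin n) × ℝ :=
  (MeasurableEquiv.toLp 2 (Fin (n+1) → ℝ)).symm.trans
   ((MeasurableEquiv.piFinSuccAbove (fun _ : Fin (n+1) => ℝ) (Fin.last n)).trans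
    ((MeasurableEquiv.prodComm : ℝ × (Fin n → ℝ) ≃ᵐ (Fin n → ℝ) × ℝ).trans
      ((MeasurableEquiv.toLp 2 (Fin n → ℝ)).prodCongr (MeasurableEquiv.refl ℝ))))

lemma psiMEquiv_coe : ⇑(psiMEquiv n) = psiFun n := by
  funext x
  simp [psiFun, psiMEquiv, MeasurableEquiv.piFinSuccAbove, Fin.succAbove_last,
    MeasurableEquiv.toLp, MeasurableEquiv.prodCongr, Prod.map]
  constructor <;> rfl

lemma psi_mp : MeasurePreserving (psiFun n) volume volume := by
  have h1 := EuclideanSpace.volume_preserving_symm_measurableEquiv_toLp (Fin (n+1))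
  have h2 := volume_preserving_piFinSuccAbove (fun _ : Fin (n+1) => ℝ) (Fin.last n)
  have h3 : MeasurePreserving (Prod.swap : ℝ × (Fin n → ℝ) → (Fin n → ℝ) × ℝ) volume volume :=
    Measure.measurePreserving_swap
  have h4 := ((EuclideanSpace.volume_preserving_symm_measurableEquiv_toLp (Fin n)).symm).prod
    (MeasurePreserving.id (volume : Measure ℝ))
  have := h4.comp (h3.comp (h2.comp h1))
  have hfun : psiFun n = (Prod.map (⇑(MeasurableEquiv.toLp 2 (Fin n → ℝ)).symm.symm) id ∘
      Prod.swap ∘ ⇑(MeasurableEquiv.piFinSuccAbove (fun _ : Fin (n+1) => ℝ) (Fin.last n)) ∘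
        ⇑(MeasurableEquiv.toLp 2 (Fin (n + 1) → ℝ)).symm) := by
    funext x
    simp [psiFun, Function.comp, MeasurableEquiv.piFinSuccAbove, Fin.succAbove_last,
    MeasurableEquiv.toLp, Prod.map]
    constructor <;> rfl
  rw [hfun]; exact this

lemma psiFun_injective : Function.Injective (psiFun n) := by
  rw [← psiMEquiv_coe]; exact (psiMEquiv n).injective

lemma psiFun_zero : psiFun n 0 = 0 := Prod.ext (PiLp.ext fun _ => rfl) rfl

/-! ### The twist map and its derivative -/

def twT (x : Esp n) : Esp n :=
  x + (x (Fin.last n) * (‖x‖ - 1)) • EuclideanSpace.single (Fin.last n) (1:ℝ)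

def twT' (x : Esp n) : Esp n →L[ℝ] Esp n :=
  ContinuousLinearMap.id ℝ (Esp n) +
    (((‖x‖ - 1) • (PiLp.proj (𝕜 := ℝ) 2 (fun _ : Fin (n+1) => ℝ) (Fin.last n)) +
      (x (Fin.last n) * ‖x‖⁻¹) • (innerSL ℝ x)).smulRight
        (EuclideanSpace.single (Fin.last n) (1:ℝ)))

lemma hasFDerivAt_norm_euc {x : Esp n} (hx : x ≠ 0) :
    HasFDerivAt (fun y : Esp n => ‖y‖) (‖x‖⁻¹ • innerSL ℝ x) x := by
  have h1 : HasFDerivAt (fun y : Esp n => ‖y‖ ^ 2) (2 • innerSL ℝ x) x :=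
    hasStrictFDerivAt_norm_sq x |>.hasFDerivAt
  have h2 := h1.sqrt (pow_ne_zero 2 (norm_ne_zero_iff.mpr hx))
  have : (fun y : Esp n => Real.sqrt (‖y‖ ^ 2)) = fun y : Esp n => ‖y‖ := by
    funext y; exact Real.sqrt_sq (norm_nonneg y)
  rw [this] at h2
  refine h2.congr_fderiv ?_
  symm
  rw [Real.sqrt_sq (norm_nonneg x)]
  ext v
  simp [two_smul]
  field_simp
  ring

lemma twT_hasFDerivAt {x : Esp n} (hx : x ≠ 0) : HasFDerivAt (twT n) (twT' n x) x := by
  unfold twT twT'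
  have hproj : HasFDerivAt (fun y : Esp n => y (Fin.last n))
      (PiLp.proj (𝕜 := ℝ) 2 (fun _ : Fin (n+1) => ℝ) (Fin.last n)) x := by
    exact (PiLp.proj (𝕜 := ℝ) 2 (fun _ : Fin (n+1) => ℝ) (Fin.last n)).hasFDerivAt
  have hnorm := hasFDerivAt_norm_euc n hx
  have hmul : HasFDerivAt (fun y : Esp n => y (Fin.last n) * (‖y‖ - 1))
      ((x (Fin.last n)) • (‖x‖⁻¹ • innerSL ℝ x) +
        (‖x‖ - 1) • (PiLp.proj (𝕜 := ℝ) 2 (fun _ : Fin (n+1) => ℝ) (Fin.last n))) x :=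
    hproj.mul (hnorm.sub_const 1)
  have := (hasFDerivAt_id x).add (hmul.smul_const (EuclideanSpace.single (Fin.last n) (1:ℝ)))
  refine this.congr_fderiv ?_
  · congr 2
    rw [smul_smul]
    abel

lemma twT'_det (x : Esp n) :
    (twT' n x).det = ‖x‖ + (x (Fin.last n))^2 * ‖x‖⁻¹ := by
  set L := ((‖x‖ - 1) • (PiLp.proj (𝕜 := ℝ) 2 (fun _ : Fin (n+1) => ℝ) (Fin.last n)) +
      (x (Fin.last n) * ‖x‖⁻¹) • (innerSL ℝ x)) with hL
  set b := (EuclideanSpace.basisFun (Fin (n+1)) ℝ).toBasis with hb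
  have hdet : (twT' n x).det = LinearMap.det ((twT' n x) : Esp n →ₗ[ℝ] Esp n) := rfl
  rw [hdet, ← LinearMap.det_toMatrix b]
  have hmat : LinearMap.toMatrix b b ((twT' n x) : Esp n →ₗ[ℝ] Esp n) =
      1 + Matrix.replicateCol Unit (fun i => if i = Fin.last n then (1:ℝ) else 0) *
        Matrix.replicateRow Unit (fun j => L (b j)) := by
    ext i j
    rw [LinearMap.toMatrix_apply]
    have : ((twT' n x) : Esp n →ₗ[ℝ] Esp n) (b j)
        = b j + L (b j) • EuclideanSpace.single (Fin.last n) (1:ℝ) := rfl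
    rw [this]
    simp only [map_add, _root_.map_smul, Finsupp.coe_add, Finsupp.coe_smul, Pi.add_apply,
      Pi.smul_apply, smul_eq_mul]
    rw [Module.Basis.repr_self]
    have hrepr : ∀ (y : Esp n) (i : Fin (n+1)), b.repr y i = y i := fun y i => rfl
    rw [hrepr]
    simp [Matrix.mul_apply, Matrix.one_apply, Finsupp.single_apply, EuclideanSpace.single_apply,
      mul_comm, eq_comm]
  rw [hmat, Matrix.det_one_add_replicateCol_mul_replicateRow]
  have hdot : dotProduct (fun j => L (b j)) (fun i => if i = Fin.last n then (1:ℝ) else 0)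
      = L (b (Fin.last n)) := by
    simp [dotProduct, mul_ite, Finset.sum_ite_eq']
  rw [hdot, hL]
  have hblast : b (Fin.last n) = EuclideanSpace.single (Fin.last n) (1:ℝ) := by
    simp [hb, EuclideanSpace.basisFun_apply]
  rw [hblast]
  simp only [ContinuousLinearMap.add_apply, ContinuousLinearMap.coe_smul', Pi.smul_apply,
    smul_eq_mul, innerSL_apply_apply]
  rw [EuclideanSpace.inner_single_right]
  simp [EuclideanSpace.single_apply]
  ring

/-! ### Basic sphere facts -/

lemma sphere_sum_sq (v : sphere (0 : Esp n) 1) :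
    ∑ i, ((v : Esp n) i)^2 = 1 := by
  have h1 : ‖(v : Esp n)‖ = 1 := mem_sphere_zero_iff_norm.mp v.2
  rw [EuclideanSpace.norm_eq] at h1
  rw [← Real.sqrt_eq_one]
  simpa [Real.norm_eq_abs, sq_abs] using h1

lemma quad_unique {b t u u' : ℝ} (hb : 0 ≤ b) (hu : 0 < u) (hu' : 0 < u')
    (h : u^2 = b*u + t^2) (h' : u'^2 = b*u' + t^2) : u = u' := by
  by_contra hne
  have h2 : (u - u') * (u + u' - b) = 0 := by nlinarith
  rcases mul_eq_zero.mp h2 with h3 | h3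
  · exact hne (by linarith)
  · nlinarith [mul_pos hu hu', sq_nonneg t]

lemma parPolar_eq_iff (ρ : ℝ) (hρ : 0 < ρ) (v : sphere (0 : Esp n) 1) (y : EuclideanSpace ℝ (Fin n))
    (t : ℝ) (h : parPolar n (ρ, v) = (y, t)) :
    (ρ^2)^2 = (∑ i, (y i)^2) * ρ^2 + t^2 := by
  have hfst : ∀ i, ρ * (v : Esp n) (Fin.castSucc i) = y i := fun i =>
    congrArg (fun z : EuclideanSpace ℝ (Fin n) × ℝ => z.1 i) h
  have hsnd : ρ^2 * (v : Esp n) (Fin.last n) = t := congrArg Prod.snd h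
  have hsum := sphere_sum_sq n v
  rw [Fin.sum_univ_castSucc] at hsum
  have hb : ∑ i, (y i)^2 = ρ^2 * (∑ i : Fin n, ((v : Esp n) (Fin.castSucc i))^2) := by
    rw [Finset.mul_sum]
    refine Finset.sum_congr rfl fun i _ => ?_
    rw [← hfst i]; ring
  rw [hb, ← hsnd]
  nlinarith [hsum]
theorem parPolar_mapsTo : Set.MapsTo (parPolar n) (Set.Ioi (0 : ℝ) ×ˢ Set.univ)
    {q : EuclideanSpace ℝ (Fin n) × ℝ | q ≠ 0} := by
  rintro ⟨ρ, v⟩ ⟨hρ, -⟩ h0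
  simp only [mem_setOf_eq, Prod.ext_iff] at h0
  obtain ⟨h1, h2⟩ := h0
  have hρ' : (0:ℝ) < ρ := hρ
  have hsum := sphere_sum_sq n v
  rw [Fin.sum_univ_castSucc] at hsum
  have hc : ∀ i : Fin n, (v : Esp n) (Fin.castSucc i) = 0 := by
    intro i
    have := congrArg (fun z : EuclideanSpace ℝ (Fin n) => z i) h1
    simp only [Prod.fst] at this
    have : ρ * (v : Esp n) (Fin.castSucc i) = 0 := this
    exact (mul_eq_zero.mp this).resolve_left hρ'.ne'
  have hl : (v : Esp n) (Fin.last n) = 0 := by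
    have : ρ^2 * (v : Esp n) (Fin.last n) = 0 := h2
    exact (mul_eq_zero.mp this).resolve_left (by positivity)
  rw [hl] at hsum
  simp only [hc] at hsum
  simp at hsum

theorem parPolar_injOn : Set.InjOn (parPolar n) (Set.Ioi (0 : ℝ) ×ˢ Set.univ) := by
  rintro ⟨ρ, v⟩ ⟨hρ, -⟩ ⟨ρ', v'⟩ ⟨hρ', -⟩ heq
  have hρ0 : (0:ℝ) < ρ := hρ
  have hρ0' : (0:ℝ) < ρ' := hρ'
  set y : EuclideanSpace ℝ (Fin n) := (parPolar n (ρ, v)).1 with hy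
  set t : ℝ := (parPolar n (ρ, v)).2 with ht
  have h1 : parPolar n (ρ, v) = (y, t) := rfl
  have h2 : parPolar n (ρ', v') = (y, t) := heq.symm.trans h1
  have e1 := parPolar_eq_iff n ρ hρ0 v y t h1
  have e2 := parPolar_eq_iff n ρ' hρ0' v' y t h2
  have hb : (0:ℝ) ≤ ∑ i, (y i)^2 := Finset.sum_nonneg fun i _ => sq_nonneg _
  have hu : ρ^2 = ρ'^2 :=
    quad_unique hb (by positivity) (by positivity) e1 e2
  have hρeq : ρ = ρ' := by
    rw [← Real.sqrt_sq hρ0.le, hu, Real.sqrt_sq hρ0'.le]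
  refine Prod.ext hρeq (Subtype.ext (PiLp.ext fun i => ?_))
  induction i using Fin.lastCases with
  | last =>
    have hA : ρ^2 * (v : Esp n) (Fin.last n) = ρ'^2 * (v' : Esp n) (Fin.last n) :=
      congrArg Prod.snd heq
    rw [← hu] at hA
    exact mul_left_cancel₀ (by positivity) hA
  | cast i =>
    have hA : ρ * (v : Esp n) (Fin.castSucc i) = ρ' * (v' : Esp n) (Fin.castSucc i) :=
      congrArg (fun z : EuclideanSpace ℝ (Fin n) × ℝ => z.1 i) heq
    rw [← hρeq] at hA
    exact mul_left_cancel₀ hρ0.ne' hA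

theorem parPolar_surjOn : Set.SurjOn (parPolar n) (Set.Ioi (0 : ℝ) ×ˢ Set.univ)
    {q : EuclideanSpace ℝ (Fin n) × ℝ | q ≠ 0} := by
  rintro ⟨y, t⟩ hq
  simp only [mem_setOf_eq] at hq
  set b : ℝ := ∑ i, (y i)^2 with hbdef
  have hb : (0:ℝ) ≤ b := Finset.sum_nonneg fun i _ => sq_nonneg _
  set s : ℝ := Real.sqrt (b^2 + 4*t^2) with hsdef
  have hs2 : s^2 = b^2 + 4*t^2 := Real.sq_sqrt (by positivity)
  set u : ℝ := (b + s)/2 with hudef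
  have hu : 0 < u := by
    rcases eq_or_ne t 0 with ht | ht
    · have hy : y ≠ 0 := by
        intro h; exact hq (by rw [h, ht]; rfl)
      obtain ⟨i, hi⟩ : ∃ i, y i ≠ 0 := by
        by_contra hcon; push_neg at hcon
        exact hy (PiLp.ext hcon)
      have h1 : (y i)^2 ≤ b := Finset.single_le_sum
        (fun j _ => sq_nonneg (y j)) (Finset.mem_univ i)
      have hbpos : 0 < b := lt_of_lt_of_le (by positivity) h1
      have : 0 ≤ s := Real.sqrt_nonneg _
      rw [hudef]; linarith
    · have hblt : b < s := by
        have ht2 : 0 < t^2 := by positivity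
        have hsnn : 0 ≤ s := Real.sqrt_nonneg _
        nlinarith [hs2, ht2, hsnn, hb]
      rw [hudef]; linarith
  have h2u : 2*u = b + s := by rw [hudef]; ring
  have hu2 : u^2 = b*u + t^2 := by nlinarith [hs2, h2u]
  set ρ : ℝ := Real.sqrt u with hρdef
  have hρ : 0 < ρ := Real.sqrt_pos.mpr hu
  have hρ2 : ρ^2 = u := Real.sq_sqrt hu.le
  set vE : Esp n := WithLp.toLp 2 (Fin.snoc (fun j => y j / ρ) (t/u) : ∀ _ : Fin (n+1), ℝ) with hvE
  have hsum : ∑ i, (vE i)^2 = 1 := by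
    rw [Fin.sum_univ_castSucc]
    have hc : ∀ j : Fin n, vE (Fin.castSucc j) = y j / ρ := fun j => by rw [hvE]; simp
    have hlast : vE (Fin.last n) = t/u := by rw [hvE]; simp
    simp only [hc, hlast, div_pow]
    rw [← Finset.sum_div, ← hbdef, hρ2]
    field_simp
    nlinarith [hu2, sq_nonneg u]
  have hmem : vE ∈ sphere (0 : Esp n) 1 := by
    rw [mem_sphere_zero_iff_norm, EuclideanSpace.norm_eq]
    rw [show (1:ℝ) = Real.sqrt 1 by simp]
    congr 1
    simpa [Real.norm_eq_abs, sq_abs] using hsum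
  refine ⟨(ρ, ⟨vE, hmem⟩), ⟨mem_Ioi.2 hρ, mem_univ _⟩, ?_⟩
  have hfst : (fun i : Fin n => ρ * vE (Fin.castSucc i)) = (y : ∀ _ : Fin n, ℝ) := by
    funext i
    rw [show vE (Fin.castSucc i) = y i / ρ from by rw [hvE]; simp]
    field_simp
  have hsnd : ρ^2 * vE (Fin.last n) = t := by
    rw [show vE (Fin.last n) = t/u from by rw [hvE]; simp, hρ2]
    field_simp
  exact Prod.ext (PiLp.ext fun i => congrFun hfst i) hsnd

theorem parPolar_bijOn : Set.BijOn (parPolar n) (Set.Ioi (0 : ℝ) ×ˢ Set.univ)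
    {q : EuclideanSpace ℝ (Fin n) × ℝ | q ≠ 0} :=
  ⟨parPolar_mapsTo n, parPolar_injOn n, parPolar_surjOn n⟩


/-! ### Connecting the twist map with `parPolar` -/

lemma psiFun_twT_smul (ρ : ℝ) (hρ : 0 < ρ) (v : sphere (0 : Esp n) 1) :
    psiFun n (twT n (ρ • (v : Esp n))) = parPolar n (ρ, v) := by
  have hnorm : ‖ρ • (v : Esp n)‖ = ρ := by
    rw [norm_smul, mem_sphere_zero_iff_norm.mp v.2, Real.norm_eq_abs, abs_of_pos hρ, mul_one]
  unfold psiFun twT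
  rw [hnorm]
  refine Prod.ext (PiLp.ext fun i => ?_) ?_
  · have hne : Fin.castSucc i ≠ Fin.last n := (Fin.castSucc_lt_last i).ne
    simp [parPolar, EuclideanSpace.single_apply, hne, PiLp.add_apply, PiLp.smul_apply]
  · simp [parPolar, EuclideanSpace.single_apply, PiLp.add_apply, PiLp.smul_apply]
    ring

lemma sphere_unit (x : Esp n) (hx : x ≠ 0) : ‖x‖⁻¹ • x ∈ sphere (0 : Esp n) 1 := by
  rw [mem_sphere_zero_iff_norm, norm_smul, norm_inv, norm_norm,
    inv_mul_cancel₀ (norm_ne_zero_iff.2 hx)]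

lemma psiFun_twT (x : Esp n) (hx : x ≠ 0) :
    psiFun n (twT n x) = parPolar n (‖x‖, ⟨‖x‖⁻¹ • x, sphere_unit n x hx⟩) := by
  have h := psiFun_twT_smul n ‖x‖ (norm_pos_iff.mpr hx) ⟨‖x‖⁻¹ • x, sphere_unit n x hx⟩
  rwa [smul_inv_smul₀ (norm_ne_zero_iff.mpr hx)] at h

lemma twT_ne_zero (x : Esp n) (hx : x ≠ 0) : twT n x ≠ 0 := by
  intro h0
  have h1 := psiFun_twT n x hx
  rw [h0, psiFun_zero] at h1
  exact absurd h1.symm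
    (parPolar_mapsTo n ⟨mem_Ioi.2 (norm_pos_iff.mpr hx), mem_univ _⟩)

lemma twT_bijOn : Set.BijOn (twT n) ({0}ᶜ : Set (Esp n)) ({0}ᶜ : Set (Esp n)) := by
  refine ⟨fun x hx => twT_ne_zero n x hx, ?_, ?_⟩
  · intro x hx x' hx' h
    have hx0 : x ≠ 0 := hx
    have hx0' : x' ≠ 0 := hx'
    have h1 := psiFun_twT n x hx0
    have h2 := psiFun_twT n x' hx0'
    rw [h] at h1
    have h3 := h1.symm.trans h2
    have h4 := parPolar_injOn n ⟨mem_Ioi.2 (norm_pos_iff.mpr hx0), mem_univ _⟩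
      ⟨mem_Ioi.2 (norm_pos_iff.mpr hx0'), mem_univ _⟩ h3
    have h5 : (‖x‖ : ℝ) = ‖x'‖ := congrArg Prod.fst h4
    have h6 : ‖x‖⁻¹ • x = ‖x'‖⁻¹ • x' :=
      congrArg (fun p : ℝ × sphere (0 : Esp n) 1 => ((p.2 : Esp n))) h4
    calc x = ‖x‖ • ‖x‖⁻¹ • x := (smul_inv_smul₀ (norm_ne_zero_iff.mpr hx0) x).symm
    _ = ‖x'‖ • ‖x'‖⁻¹ • x' := by rw [h6, h5]
    _ = x' := smul_inv_smul₀ (norm_ne_zero_iff.mpr hx0') x'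
  · intro z hz
    have hz0 : z ≠ 0 := hz
    have hz' : psiFun n z ≠ 0 := fun h => hz0 (psiFun_injective n (h.trans (psiFun_zero n).symm))
    obtain ⟨⟨ρ, v⟩, ⟨hρ, -⟩, hpar⟩ := parPolar_surjOn n (show psiFun n z ∈ _ from hz')
    have hρ0 : (0:ℝ) < ρ := hρ
    have hvne : (v : Esp n) ≠ 0 := ne_of_mem_sphere v.2 one_ne_zero
    refine ⟨ρ • (v : Esp n), smul_ne_zero hρ0.ne' hvne, ?_⟩
    apply psiFun_injective n
    rw [psiFun_twT_smul n ρ hρ0 v, hpar]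

lemma twT'_det_abs (x : Esp n) (hx : x ≠ 0) :
    |(twT' n x).det| = ‖x‖ * (1 + ((‖x‖⁻¹ • x) (Fin.last n))^2) := by
  have h0 : (0:ℝ) < ‖x‖ := norm_pos_iff.mpr hx
  rw [twT'_det, abs_of_pos (add_pos_of_pos_of_nonneg h0 (by positivity))]
  have hc : (‖x‖⁻¹ • x) (Fin.last n) = ‖x‖⁻¹ * x (Fin.last n) := rfl
  rw [hc]
  field_simp

end ParPolarAux
end

open ParPolarAux in
/-- parabolic polar coordinates.  The map `(ρ,ζ,τ) ↦ (ρζ, ρ²τ)` is a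
bijection from `(0,∞) × S^n` onto `ℝ^{n+1} \ {0}`, and for integrable `f`,
`∬ f(X,t) dX dt = ∫_{S^n} ∫_0^∞ f(ρζ,ρ²τ) ρ^{n+1} dρ (1+τ²) dσ_{S^n}(ζ,τ)`. -/
theorem parabolic_polar_coordinates (n : ℕ) :
    Set.BijOn (parPolar n) (Set.Ioi (0 : ℝ) ×ˢ Set.univ)
      {q : EuclideanSpace ℝ (Fin n) × ℝ | q ≠ 0} ∧
    ∀ f : EuclideanSpace ℝ (Fin n) × ℝ → ℝ, Integrable f →
      (∫ q, f q) =
        ∫ v : sphere (0 : EuclideanSpace ℝ (Fin (n + 1))) 1,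
          (1 + ((v : EuclideanSpace ℝ (Fin (n + 1))) (Fin.last n)) ^ 2) *
            (∫ ρ in Set.Ioi (0 : ℝ), f (parPolar n (ρ, v)) * ρ ^ (n + 1))
          ∂(volume : Measure (EuclideanSpace ℝ (Fin (n + 1)))).toSphere := by
  refine ⟨parPolar_bijOn n, fun f hf => ?_⟩
  have hmeas : MeasurableSet ({0}ᶜ : Set (Esp n)) := (measurableSet_singleton 0).compl
  have hderiv : ∀ x ∈ ({0}ᶜ : Set (Esp n)), HasFDerivWithinAt (twT n) (twT' n x) {0}ᶜ x :=
    fun x hx => (twT_hasFDerivAt n hx).hasFDerivWithinAt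
  have hinj : Set.InjOn (twT n) ({0}ᶜ : Set (Esp n)) := (twT_bijOn n).injOn
  have himg : twT n '' ({0}ᶜ : Set (Esp n)) = {0}ᶜ := (twT_bijOn n).image_eq
  set g : Esp n → ℝ := fun x => f (psiFun n x) with hg
  have hgint : Integrable g := by
    have hc := (psi_mp n).integrable_comp (g := f) hf.aestronglyMeasurable
    exact hc.mpr hf
  have hemb : MeasurableEmbedding (psiFun n) := by
    rw [← psiMEquiv_coe]; exact (psiMEquiv n).measurableEmbedding
  have step1 : (∫ q, f q) = ∫ x, g x := ((psi_mp n).integral_comp hemb f).symm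
  have step2 : (∫ x, g x) = ∫ x in ({0}ᶜ : Set (Esp n)), g x := by
    rw [MeasureTheory.restrict_compl_singleton]
  have step3 : (∫ x in ({0}ᶜ : Set (Esp n)), g x) =
      ∫ x in ({0}ᶜ : Set (Esp n)), |(twT' n x).det| • g (twT n x) := by
    conv_lhs => rw [← himg]
    exact integral_image_eq_integral_abs_det_fderiv_smul volume hmeas hderiv hinj g
  have hFint : IntegrableOn (fun x => |(twT' n x).det| • g (twT n x)) ({0}ᶜ : Set (Esp n))
      volume := by
    rw [← integrableOn_image_iff_integrableOn_abs_det_fderiv_smul volume hmeas hderiv hinj g,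
      himg]
    exact hgint.integrableOn
  set e := homeomorphUnitSphereProd (Esp n) with he
  have hrank : Module.finrank ℝ (Esp n) - 1 = n := by
    simp [finrank_euclideanSpace_fin]
  have mp' : MeasurePreserving e ((volume : Measure (Esp n)).comap Subtype.val)
      ((volume : Measure (Esp n)).toSphere.prod (Measure.volumeIoiPow n)) := by
    have := (volume : Measure (Esp n)).measurePreserving_homeomorphUnitSphereProd
    rwa [hrank] at this
  set G : sphere (0 : Esp n) 1 × Ioi (0:ℝ) → ℝ :=
    fun p => (p.2 : ℝ) * (1 + ((p.1 : Esp n) (Fin.last n))^2) *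
      f (parPolar n ((p.2 : ℝ), p.1)) with hG
  have hkey : ∀ z : ({0}ᶜ : Set (Esp n)),
      |(twT' n (z : Esp n)).det| • g (twT n (z : Esp n)) = G (e z) := by
    intro z
    have hz : (z : Esp n) ≠ 0 := z.2
    have h2 : g (twT n (z : Esp n)) =
        f (parPolar n (‖(z : Esp n)‖, ⟨‖(z : Esp n)‖⁻¹ • (z : Esp n), sphere_unit n _ hz⟩)) := by
      rw [hg]; exact congrArg f (psiFun_twT n _ hz)
    have hez : e z = (⟨‖(z : Esp n)‖⁻¹ • (z : Esp n), sphere_unit n _ hz⟩,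
        ⟨‖(z : Esp n)‖, mem_Ioi.2 (norm_pos_iff.mpr hz)⟩) :=
      Prod.ext (Subtype.ext (one_smul ℝ _)) (Subtype.ext (div_one _))
    rw [smul_eq_mul, h2, twT'_det_abs n _ hz, hG, hez]
  have step5 : (∫ x in ({0}ᶜ : Set (Esp n)), |(twT' n x).det| • g (twT n x)) =
      ∫ p, G p ∂((volume : Measure (Esp n)).toSphere.prod (Measure.volumeIoiPow n)) := by
    rw [← integral_subtype_comap hmeas (fun x => |(twT' n x).det| • g (twT n x))]
    rw [show (fun z : ({0}ᶜ : Set (Esp n)) => |(twT' n (z : Esp n)).det| • g (twT n (z : Esp n)))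
      = fun z => G (e z) from funext hkey]
    exact mp'.integral_comp e.measurableEmbedding G
  have hGint : Integrable G
      ((volume : Measure (Esp n)).toSphere.prod (Measure.volumeIoiPow n)) := by
    rw [← mp'.integrable_comp_emb e.measurableEmbedding]
    have hcomp : (G ∘ e) = fun z : ({0}ᶜ : Set (Esp n)) =>
        |(twT' n (z : Esp n)).det| • g (twT n (z : Esp n)) := (funext hkey).symm
    rw [hcomp]
    have h7 := hFint
    rw [IntegrableOn, ← map_comap_subtype_coe hmeas] at h7
    exact ((MeasurableEmbedding.subtype_coe hmeas).integrable_map_iff).mp h7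
  have step8 := integral_prod G hGint
  have step9 : ∀ v : sphere (0 : Esp n) 1,
      (∫ r : Ioi (0:ℝ), G (v, r) ∂(Measure.volumeIoiPow n)) =
      (1 + ((v : Esp n) (Fin.last n))^2) *
        ∫ ρ in Ioi (0:ℝ), f (parPolar n (ρ, v)) * ρ^(n+1) := by
    intro v
    rw [Measure.volumeIoiPow]
    simp only [ENNReal.ofReal]
    rw [integral_withDensity_eq_integral_smul
      ((measurable_subtype_coe.pow_const _).real_toNNReal)]
    have hmid : (∫ r : Ioi (0:ℝ), Real.toNNReal ((r : ℝ)^n) • G (v, r)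
        ∂(Measure.comap Subtype.val volume)) =
        ∫ ρ in Ioi (0:ℝ), Real.toNNReal (ρ^n) •
          (ρ * (1 + ((v : Esp n) (Fin.last n))^2) * f (parPolar n (ρ, v))) := by
      exact integral_subtype_comap (μ := (volume : Measure ℝ)) measurableSet_Ioi
        (fun ρ : ℝ => Real.toNNReal (ρ^n) •
          (ρ * (1 + ((v : Esp n) (Fin.last n))^2) * f (parPolar n (ρ, v))))
    rw [hmid]
    rw [setIntegral_congr_fun measurableSet_Ioi (g := fun ρ : ℝ =>
        (1 + ((v : Esp n) (Fin.last n))^2) * (f (parPolar n (ρ, v)) * ρ^(n+1)))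
      (fun ρ hρ => by
        rw [NNReal.smul_def, Real.coe_toNNReal _ (pow_nonneg (le_of_lt hρ) _), smul_eq_mul,
          pow_succ]
        ring)]
    exact integral_const_mul _ _
  rw [step1, step2, step3, step5, step8]
  exact integral_congr_ae (Filter.Eventually.of_forall step9)
end

section
/- Mollified BMO bound, Case ν ≥ r: Let Σ be parabolic ADR with surface measure σ, and let Λ_ν(x,z) = b(x,ν)^{-1} ζ((x-z)/ν^α) be a normalized mollifier on Σ with supp ζ ⊂ B(0,1), ζ ≡ 1 on B(0,1/2), 0 ≤ ζ ≤ 1, and b(x,ν) = ∬_Σ ζ((x-z)/ν^α) dσ(z) ≈ ν^{n+1}. Define f_ν(x) := ∬_Σ Λ_ν(x,z) f(z) dσ(z). Then for any surface cube Δ = Δ(y,r) with ν ≥ r, ⨍_Δ |f_ν - c| dσ ≲ ||f||_{BMO(Σ)}, where c = ⨍_{Δ(x,2ν)} f dσ, with implicit constant depending only on n and the ADR constant. -/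
open MeasureTheory Set
open scoped ENNReal

/-- The parabolic distance `|X - Y| + |t - s|^{1/2}`. -/
noncomputable def pdist {n : ℕ} (p q : EuclideanSpace ℝ (Fin n) × ℝ) : ℝ :=
  ‖p.1 - q.1‖ + Real.sqrt |p.2 - q.2|

/-- The diameter of a set with respect to the parabolic distance. -/
noncomputable def pdiam {n : ℕ} (S : Set (EuclideanSpace ℝ (Fin n) × ℝ)) : ℝ≥0∞ :=
  ⨆ (p) (_ : p ∈ S) (q) (_ : q ∈ S), ENNReal.ofReal (pdist p q)

/-- Parabolic scaling `p/ν^α`: spatial components divided by `ν`, time by `ν²`. -/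
noncomputable def pscale {n : ℕ} (ν : ℝ) (p : EuclideanSpace ℝ (Fin n) × ℝ) :
    EuclideanSpace ℝ (Fin n) × ℝ :=
  (ν⁻¹ • p.1, p.2 / ν ^ 2)

open Filter
open scoped Topology

section Aux

variable {n : ℕ}

lemma isOpen_pQ (x : EuclideanSpace ℝ (Fin n) × ℝ) (r : ℝ) : IsOpen (pQ x r) := by
  have h1 : IsOpen {q : EuclideanSpace ℝ (Fin n) × ℝ | |x.2 - q.2| < r ^ 2} :=
    isOpen_lt ((continuous_const.sub continuous_snd).abs) continuous_const
  have h2 : ∀ i, IsOpen {q : EuclideanSpace ℝ (Fin n) × ℝ | |x.1 i - q.1 i| < r} := by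
    intro i
    exact isOpen_lt
      ((continuous_const.sub
        (((EuclideanSpace.proj (𝕜 := ℝ) i).continuous).comp continuous_fst)).abs)
      continuous_const
  have : pQ x r = (⋂ i, {q : EuclideanSpace ℝ (Fin n) × ℝ | |x.1 i - q.1 i| < r}) ∩
      {q : EuclideanSpace ℝ (Fin n) × ℝ | |x.2 - q.2| < r ^ 2} := by
    ext q
    simp only [pQ, Set.mem_setOf_eq, Set.mem_inter_iff, Set.mem_iInter]
  rw [this]
  exact (isOpen_iInter_of_finite h2).inter h1

lemma pQ_subset (x : EuclideanSpace ℝ (Fin n) × ℝ) {a b : ℝ} (ha : 0 ≤ a) (hab : a ≤ b) :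
    pQ x a ⊆ pQ x b := by
  rintro q ⟨h1, h2⟩
  exact ⟨fun i => (h1 i).trans_le hab, h2.trans_le (by nlinarith)⟩

lemma abs_coord_le (v : EuclideanSpace ℝ (Fin n)) (i : Fin n) : |v i| ≤ ‖v‖ := by
  rw [EuclideanSpace.norm_eq]
  have h1 : |v i| = Real.sqrt (‖v i‖ ^ 2) := by
    rw [Real.sqrt_sq (norm_nonneg _), Real.norm_eq_abs]
  rw [h1]
  exact Real.sqrt_le_sqrt (Finset.single_le_sum
    (f := fun j => ‖v j‖ ^ 2) (fun j _ => sq_nonneg _) (Finset.mem_univ i))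

lemma norm_le_coords {v : EuclideanSpace ℝ (Fin n)} {ρ : ℝ} (hρ : 0 ≤ ρ)
    (h : ∀ i, |v i| ≤ ρ) : ‖v‖ ≤ ((n : ℝ) + 1) * ρ := by
  rw [EuclideanSpace.norm_eq]
  have h1 : ∑ j, ‖v j‖ ^ 2 ≤ (((n : ℝ) + 1) * ρ) ^ 2 := by
    have h2 : ∑ j, ‖v j‖ ^ 2 ≤ ∑ _j : Fin n, ρ ^ 2 := by
      refine Finset.sum_le_sum fun j _ => ?_
      rw [Real.norm_eq_abs]
      exact pow_le_pow_left₀ (abs_nonneg _) (h j) 2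
    have h3 : ∑ _j : Fin n, ρ ^ 2 = (n : ℝ) * ρ ^ 2 := by
      rw [Finset.sum_const, Finset.card_univ, Fintype.card_fin, nsmul_eq_mul]
    have h4 : (n : ℝ) * ρ ^ 2 ≤ (((n : ℝ) + 1) * ρ) ^ 2 := by
      have hn : (0 : ℝ) ≤ (n : ℝ) := Nat.cast_nonneg n
      nlinarith [sq_nonneg ρ]
    linarith
  calc Real.sqrt (∑ j, ‖v j‖ ^ 2) ≤ Real.sqrt ((((n : ℝ) + 1) * ρ) ^ 2) :=
        Real.sqrt_le_sqrt h1
    _ = ((n : ℝ) + 1) * ρ := Real.sqrt_sq (by positivity)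

lemma isOpen_lt_measure_pQ (τ : Measure (EuclideanSpace ℝ (Fin n) × ℝ)) {ρ : ℝ}
    (hρ : 0 < ρ) (c : ℝ≥0∞) : IsOpen {x | c < τ (pQ x ρ)} := by
  rw [isOpen_iff_mem_nhds]
  intro x hx
  have hx' : c < τ (pQ x ρ) := hx
  have hρk : ∀ k : ℕ, 0 < ρ - ρ / ((k : ℝ) + 2) := by
    intro k
    have h2 : ρ / ((k : ℝ) + 2) < ρ := by
      apply div_lt_self hρ
      have : (0 : ℝ) ≤ (k : ℝ) := Nat.cast_nonneg k
      linarith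
    linarith
  have hρk' : ∀ k : ℕ, ρ - ρ / ((k : ℝ) + 2) ≤ ρ := by
    intro k
    have : 0 ≤ ρ / ((k : ℝ) + 2) := by positivity
    linarith
  have hU : pQ x ρ = ⋃ k : ℕ, pQ x (ρ - ρ / ((k : ℝ) + 2)) := by
    ext q
    simp only [Set.mem_iUnion]
    constructor
    · rintro ⟨h1, h2⟩
      have h0 : Tendsto (fun k : ℕ => ((k : ℝ) + 2)) atTop atTop :=
        tendsto_atTop_add_const_right atTop 2 tendsto_natCast_atTop_atTop
      have hdiv : Tendsto (fun k : ℕ => ρ / ((k : ℝ) + 2)) atTop (𝓝 0) :=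
        Tendsto.div_atTop tendsto_const_nhds h0
      have ht : Tendsto (fun k : ℕ => ρ - ρ / ((k : ℝ) + 2)) atTop (𝓝 ρ) := by
        simpa using tendsto_const_nhds.sub hdiv
      have e1 : ∀ᶠ k : ℕ in atTop, ∀ i, |x.1 i - q.1 i| < ρ - ρ / ((k : ℝ) + 2) :=
        eventually_all.2 fun i => ht.eventually_const_lt (h1 i)
      have e2 : ∀ᶠ k : ℕ in atTop, |x.2 - q.2| < (ρ - ρ / ((k : ℝ) + 2)) ^ 2 :=
        (ht.pow 2).eventually_const_lt h2
      obtain ⟨k, hk1, hk2⟩ := (e1.and e2).exists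
      exact ⟨k, hk1, hk2⟩
    · rintro ⟨k, hk⟩
      exact pQ_subset x (hρk k).le (hρk' k) hk
  have hmono : Monotone fun k : ℕ => pQ x (ρ - ρ / ((k : ℝ) + 2)) := by
    intro k k' hkk'
    apply pQ_subset x (hρk k).le
    have hc : ((k : ℝ) + 2) ≤ ((k' : ℝ) + 2) := by
      have := (Nat.cast_le (α := ℝ)).mpr hkk'
      linarith
    have : ρ / ((k' : ℝ) + 2) ≤ ρ / ((k : ℝ) + 2) :=
      div_le_div_of_nonneg_left hρ.le (by positivity) hc
    linarith
  rw [hU, hmono.directed_le.measure_iUnion, lt_iSup_iff] at hx'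
  obtain ⟨k, hk⟩ := hx'
  have hε : 0 < ρ / ((k : ℝ) + 2) := by positivity
  have hερ : ρ / ((k : ℝ) + 2) ≤ ρ := by
    have := hρk k
    linarith
  refine Filter.mem_of_superset ((isOpen_pQ x (ρ / ((k : ℝ) + 2))).mem_nhds ?_) ?_
  · exact ⟨fun i => by simpa using hε, by simpa using (by positivity : 0 < (ρ / ((k : ℝ) + 2)) ^ 2)⟩
  · intro x' hx'
    show c < τ (pQ x' ρ)
    refine hk.trans_le (measure_mono ?_)
    rintro q ⟨hq1, hq2⟩
    constructor
    · intro i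
      have h1 := hx'.1 i
      have h2 := hq1 i
      have h3 : |x'.1 i - q.1 i| ≤ |x'.1 i - x.1 i| + |x.1 i - q.1 i| := abs_sub_le _ _ _
      have h4 : |x'.1 i - x.1 i| = |x.1 i - x'.1 i| := abs_sub_comm _ _
      linarith
    · have h1 := hx'.2
      have h3 : |x'.2 - q.2| ≤ |x'.2 - x.2| + |x.2 - q.2| := abs_sub_le _ _ _
      have h4 : |x'.2 - x.2| = |x.2 - x'.2| := abs_sub_comm _ _
      nlinarith [hε, hερ]

end Aux

/-- mollified BMO bound, case `ν ≥ r`.  With `Σ` parabolic ADR,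
`Λ_ν(x,z) = b(x,ν)⁻¹ ζ((x-z)/ν^α)` a normalized mollifier, and
`f_ν(x) = ∬_Σ Λ_ν(x,z) f(z) dσ(z)`, one has, for any surface cube `Δ = Δ(y,r)` with
`ν ≥ r`, `⨍_Δ |f_ν - c| dσ ≲ ‖f‖_{BMO(Σ)}` where `c = ⨍_{Δ(y,2ν)} f dσ`, with
constant depending only on `n` and the ADR constant `M₀`. -/
theorem mollified_bmo_case_nu_ge_r (n : ℕ) (M₀ : ℝ) (hM₀ : 0 < M₀) :
    ∃ C > (0 : ℝ),
      ∀ (S : Set (EuclideanSpace ℝ (Fin n) × ℝ))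
        (σ : Measure (EuclideanSpace ℝ (Fin n) × ℝ))
        (ζ : EuclideanSpace ℝ (Fin n) × ℝ → ℝ)
        (f : EuclideanSpace ℝ (Fin n) × ℝ → ℝ) (B : ℝ),
        -- ADR
        (∀ x ∈ S, ∀ ρ : ℝ, 0 < ρ → ENNReal.ofReal ρ < pdiam S →
          ENNReal.ofReal (ρ ^ (n + 1) / M₀) ≤ σ (pQ x ρ ∩ S) ∧
            σ (pQ x ρ ∩ S) ≤ ENNReal.ofReal (M₀ * ρ ^ (n + 1))) →
        -- properties of the bump function ζ
        Continuous ζ →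
        (∀ p, 0 ≤ ζ p ∧ ζ p ≤ 1) →
        (∀ p : EuclideanSpace ℝ (Fin n) × ℝ, ζ p ≠ 0 → ‖p.1‖ < 1 ∧ |p.2| < 1) →
        (∀ p : EuclideanSpace ℝ (Fin n) × ℝ, ‖p.1‖ ≤ 1 / 2 → |p.2| ≤ 1 / 2 → ζ p = 1) →
        -- f is locally integrable on Σ and has BMO norm at most B
        (∀ x r, IntegrableOn f (pQ x r ∩ S) σ) →
        0 ≤ B →
        (∀ y ∈ S, ∀ ρ : ℝ, 0 < ρ → ENNReal.ofReal ρ < pdiam S →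
          ⨍ z in pQ y ρ ∩ S, |f z - ⨍ w in pQ y ρ ∩ S, f w ∂σ| ∂σ ≤ B) →
        -- conclusion: Case ν ≥ r
        ∀ y ∈ S, ∀ ν r : ℝ, 0 < r → r ≤ ν → ENNReal.ofReal (2 * ν) < pdiam S →
          ⨍ x in pQ y r ∩ S,
              |(∫ z in S, (∫ w in S, ζ (pscale ν (x - w)) ∂σ)⁻¹ *
                  ζ (pscale ν (x - z)) * f z ∂σ) -
                ⨍ z in pQ y (2 * ν) ∩ S, f z ∂σ| ∂σ ≤ C * B := by
  classical
  refine ⟨2 ^ (n + 2) * M₀ ^ 2 * (2 * ((n : ℝ) + 1)) ^ (n + 1), by positivity, ?_⟩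
  intro S σ ζ f B hADR hζc hζ01 hζsupp hζone hf hB hBMO y hy ν r hr hrν hdiam
  have hν : 0 < ν := hr.trans_le hrν
  set C : ℝ := 2 ^ (n + 2) * M₀ ^ 2 * (2 * ((n : ℝ) + 1)) ^ (n + 1) with hCdef
  have hC : 0 < C := by rw [hCdef]; positivity
  set ρ₀ : ℝ := ν / (2 * ((n : ℝ) + 1)) with hρ₀def
  have hρ₀ : 0 < ρ₀ := by rw [hρ₀def]; positivity
  have hρ₀ν : ρ₀ ≤ ν := by
    rw [hρ₀def]
    apply div_le_self hν.le
    have : (0 : ℝ) ≤ (n : ℝ) := Nat.cast_nonneg n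
    linarith
  set β : ℝ := ρ₀ ^ (n + 1) / (2 * M₀) with hβdef
  have hβ : 0 < β := by rw [hβdef]; positivity
  have hdiamρ₀ : ENNReal.ofReal ρ₀ < pdiam S :=
    lt_of_le_of_lt (ENNReal.ofReal_le_ofReal (by linarith)) hdiam
  obtain ⟨hDlow, hDup⟩ := hADR y hy (2 * ν) (by linarith) hdiam
  have hDfin : σ (pQ y (2 * ν) ∩ S) < ⊤ := lt_of_le_of_lt hDup ENNReal.ofReal_lt_top
  set c : ℝ := ⨍ z in pQ y (2 * ν) ∩ S, f z ∂σ with hcdef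
  set μD : Measure (EuclideanSpace ℝ (Fin n) × ℝ) := σ.restrict (pQ y (2 * ν) ∩ S) with hμDdef
  have hμDuniv : μD Set.univ = σ (pQ y (2 * ν) ∩ S) := by
    rw [hμDdef, Measure.restrict_apply MeasurableSet.univ, Set.univ_inter]
  haveI : IsFiniteMeasure μD := ⟨by rw [hμDuniv]; exact hDfin⟩
  have hfD : Integrable f μD := hf y (2 * ν)
  -- the good open set V
  set V : Set (EuclideanSpace ℝ (Fin n) × ℝ) :=
    {x | ENNReal.ofReal β < (σ.restrict S) (pQ x ρ₀)} with hVdef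
  have hVopen : IsOpen V := isOpen_lt_measure_pQ _ hρ₀ _
  have hQV : pQ y r ∩ S ⊆ V := by
    rintro x ⟨hxQ, hxS⟩
    obtain ⟨hlow, _⟩ := hADR x hxS ρ₀ hρ₀ hdiamρ₀
    show ENNReal.ofReal β < (σ.restrict S) (pQ x ρ₀)
    rw [Measure.restrict_apply (isOpen_pQ x ρ₀).measurableSet]
    refine lt_of_lt_of_le ?_ hlow
    rw [ENNReal.ofReal_lt_ofReal_iff (by positivity)]
    rw [hβdef]
    rw [div_lt_div_iff₀ (by positivity) hM₀]
    nlinarith [pow_pos hρ₀ (n + 1)]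
  -- the pointwise bound
  have key : ∀ x, x ∈ V → x ∈ pQ y r →
      |(∫ z in S, (∫ w in S, ζ (pscale ν (x - w)) ∂σ)⁻¹ *
          ζ (pscale ν (x - z)) * f z ∂σ) - c| ≤ C * B := by
    intro x hxV hxQ
    set b : ℝ := ∫ w in S, ζ (pscale ν (x - w)) ∂σ with hbdef
    -- support of the mollifier
    have hsupp : ∀ w, w ∉ pQ x ν → ζ (pscale ν (x - w)) = 0 := by
      intro w hw
      by_contra h
      obtain ⟨h1, h2⟩ := hζsupp _ h
      apply hw
      have hfst : (pscale ν (x - w)).1 = ν⁻¹ • (x.1 - w.1) := by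
        simp [pscale, Prod.fst_sub]
      have hsnd : (pscale ν (x - w)).2 = (x.2 - w.2) / ν ^ 2 := by
        simp [pscale, Prod.snd_sub]
      rw [hfst] at h1
      rw [hsnd] at h2
      have hn1 : ‖ν⁻¹ • (x.1 - w.1)‖ = ν⁻¹ * ‖x.1 - w.1‖ := by
        rw [norm_smul, Real.norm_eq_abs, abs_of_pos (inv_pos.mpr hν)]
      rw [hn1] at h1
      have hnorm : ‖x.1 - w.1‖ < ν := by
        have := (inv_mul_lt_one₀ hν).mp h1
        · exact this
      have htime : |x.2 - w.2| < ν ^ 2 := by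
        rw [abs_div, abs_of_pos (by positivity : (0:ℝ) < ν ^ 2), div_lt_one (by positivity)] at h2
        exact h2
      constructor
      · intro i
        have hc := abs_coord_le (x.1 - w.1) i
        have : (x.1 - w.1) i = x.1 i - w.1 i := by simp
        rw [this] at hc
        linarith
      · exact htime
    have hQν : pQ x ν ⊆ pQ y (2 * ν) := by
      rintro w ⟨h1, h2⟩
      constructor
      · intro i
        have ha := hxQ.1 i
        have hb' := h1 i
        have h3 : |y.1 i - w.1 i| ≤ |y.1 i - x.1 i| + |x.1 i - w.1 i| := abs_sub_le _ _ _
        linarith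
      · have ha := hxQ.2
        have h3 : |y.2 - w.2| ≤ |y.2 - x.2| + |x.2 - w.2| := abs_sub_le _ _ _
        nlinarith
    have hζxm : Continuous fun w : EuclideanSpace ℝ (Fin n) × ℝ => ζ (pscale ν (x - w)) := by
      apply hζc.comp
      have hsub : Continuous fun w : EuclideanSpace ℝ (Fin n) × ℝ => x - w :=
        continuous_const.sub continuous_id
      exact ((hsub.fst.const_smul ν⁻¹).prodMk (hsub.snd.div_const (ν ^ 2)))
    have hτfin : (σ.restrict S) (pQ x ν) < ⊤ := by
      rw [Measure.restrict_apply (isOpen_pQ x ν).measurableSet]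
      exact lt_of_le_of_lt (measure_mono (Set.inter_subset_inter hQν (subset_refl S))) hDfin
    have hζabs : ∀ w : EuclideanSpace ℝ (Fin n) × ℝ, ‖ζ (pscale ν (x - w))‖ ≤ 1 := by
      intro w
      rw [Real.norm_eq_abs, abs_le]
      exact ⟨by linarith [(hζ01 (pscale ν (x - w))).1], (hζ01 _).2⟩
    have hζint : Integrable (fun w => ζ (pscale ν (x - w))) (σ.restrict S) := by
      refine Integrable.mono' (g := (pQ x ν).indicator fun _ => (1 : ℝ)) ?_
        hζxm.aestronglyMeasurable (Filter.Eventually.of_forall ?_)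
      · rw [integrable_indicator_iff (isOpen_pQ x ν).measurableSet]
        exact integrableOn_const hτfin.ne
      · intro w
        by_cases hw : w ∈ pQ x ν
        · rw [Set.indicator_of_mem hw]
          exact hζabs w
        · rw [Set.indicator_of_notMem hw, hsupp w hw]
          simp
    -- the mollifier equals 1 on a small cube
    have hone : ∀ w ∈ pQ x ρ₀, ζ (pscale ν (x - w)) = 1 := by
      rintro w ⟨hw1, hw2⟩
      apply hζone
      · have hfst : (pscale ν (x - w)).1 = ν⁻¹ • (x.1 - w.1) := by
          simp [pscale, Prod.fst_sub]
        rw [hfst, norm_smul, Real.norm_eq_abs, abs_of_pos (inv_pos.mpr hν)]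
        have hcoords : ∀ i, |(x.1 - w.1) i| ≤ ρ₀ := by
          intro i
          have : (x.1 - w.1) i = x.1 i - w.1 i := by simp
          rw [this]
          exact (hw1 i).le
        have hnr : ‖x.1 - w.1‖ ≤ ((n : ℝ) + 1) * ρ₀ := norm_le_coords hρ₀.le hcoords
        have heq : ((n : ℝ) + 1) * ρ₀ = ν / 2 := by
          rw [hρ₀def]
          field_simp
        rw [heq] at hnr
        rw [inv_mul_le_iff₀ hν]
        linarith
      · have hsnd : (pscale ν (x - w)).2 = (x.2 - w.2) / ν ^ 2 := by
          simp [pscale, Prod.snd_sub]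
        rw [hsnd, abs_div, abs_of_pos (by positivity : (0:ℝ) < ν ^ 2),
          div_le_iff₀ (by positivity)]
        have hρ₀half : ρ₀ ≤ ν / 2 := by
          rw [hρ₀def, div_le_div_iff₀ (by positivity) (by norm_num)]
          have : (0 : ℝ) ≤ (n : ℝ) := Nat.cast_nonneg n
          nlinarith
        nlinarith [hw2, hρ₀]
    -- lower bound for b
    have hblow : β < b := by
      have hρfin : (σ.restrict S) (pQ x ρ₀) < ⊤ :=
        lt_of_le_of_lt (measure_mono (pQ_subset x hρ₀.le hρ₀ν)) hτfin
      have hido : Integrable ((pQ x ρ₀).indicator fun _ => (1 : ℝ)) (σ.restrict S) := by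
        rw [integrable_indicator_iff (isOpen_pQ x ρ₀).measurableSet]
        exact integrableOn_const hρfin.ne
      have h1 : ∫ w, ((pQ x ρ₀).indicator fun _ => (1 : ℝ)) w ∂(σ.restrict S) ≤
          ∫ w in S, ζ (pscale ν (x - w)) ∂σ := by
        refine integral_mono hido hζint ?_
        intro w
        by_cases hw : w ∈ pQ x ρ₀
        · rw [Set.indicator_of_mem hw]
          exact le_of_eq (hone w hw).symm
        · rw [Set.indicator_of_notMem hw]
          exact (hζ01 _).1
      rw [integral_indicator_const (1 : ℝ) (isOpen_pQ x ρ₀).measurableSet] at h1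
      have h2 : β < ((σ.restrict S) (pQ x ρ₀)).toReal := by
        rw [← ENNReal.ofReal_lt_iff_lt_toReal hβ.le hρfin.ne]
        exact hxV
      rw [← hbdef] at h1
      simp only [smul_eq_mul, mul_one, measureReal_def] at h1
      linarith
    have hbpos : 0 < b := hβ.trans hblow
    -- moving integrals over `S` to integrals over `μD`
    have hswap : ∀ F : EuclideanSpace ℝ (Fin n) × ℝ → ℝ,
        (∀ z, z ∉ pQ y (2 * ν) → F z = 0) →
        ∫ z in S, F z ∂σ = ∫ z, F z ∂μD := by
      intro F hF
      rw [← setIntegral_eq_integral_of_forall_compl_eq_zero hF (μ := σ.restrict S),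
        Measure.restrict_restrict (isOpen_pQ y (2 * ν)).measurableSet, ← hμDdef]
    have hvanish : ∀ z, z ∉ pQ y (2 * ν) → ζ (pscale ν (x - z)) = 0 := by
      intro z hz
      exact hsupp z fun hm => hz (hQν hm)
    have hbD : b = ∫ w, ζ (pscale ν (x - w)) ∂μD := by
      rw [hbdef]
      exact hswap _ hvanish
    have hID : (∫ z in S, b⁻¹ * ζ (pscale ν (x - z)) * f z ∂σ) =
        b⁻¹ * ∫ z, ζ (pscale ν (x - z)) * f z ∂μD := by
      rw [hswap (fun z => b⁻¹ * ζ (pscale ν (x - z)) * f z)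
        (fun z hz => by simp [hvanish z hz])]
      simp only [mul_assoc]
      exact integral_const_mul _ _
    have hζfi : Integrable (fun z => ζ (pscale ν (x - z)) * f z) μD :=
      hfD.bdd_mul hζxm.aestronglyMeasurable (Filter.Eventually.of_forall hζabs)
    have hζiD : Integrable (fun w => ζ (pscale ν (x - w))) μD := by
      rw [hμDdef, ← Measure.restrict_restrict (isOpen_pQ y (2 * ν)).measurableSet]
      exact hζint.restrict
    have hident : (∫ z in S, b⁻¹ * ζ (pscale ν (x - z)) * f z ∂σ) - c =
        b⁻¹ * ∫ z, ζ (pscale ν (x - z)) * (f z - c) ∂μD := by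
      rw [hID]
      have h5 : ∫ z, ζ (pscale ν (x - z)) * (f z - c) ∂μD =
          (∫ z, ζ (pscale ν (x - z)) * f z ∂μD) - c * ∫ z, ζ (pscale ν (x - z)) ∂μD := by
        rw [show (fun z => ζ (pscale ν (x - z)) * (f z - c)) =
            fun z => ζ (pscale ν (x - z)) * f z - c * ζ (pscale ν (x - z)) by
          funext z; ring]
        rw [integral_sub hζfi (hζiD.const_mul c), integral_const_mul]
      rw [h5, mul_sub, ← hbD]
      have h6 : b⁻¹ * (c * b) = c := by field_simp
      rw [h6]
    -- estimates
    have habs : |∫ z, ζ (pscale ν (x - z)) * (f z - c) ∂μD| ≤ ∫ z, |f z - c| ∂μD := by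
      have h7 : |∫ z, ζ (pscale ν (x - z)) * (f z - c) ∂μD| ≤
          ∫ z, |ζ (pscale ν (x - z)) * (f z - c)| ∂μD := by
        have h7' := norm_integral_le_integral_norm (μ := μD)
          fun z => ζ (pscale ν (x - z)) * (f z - c)
        simp only [Real.norm_eq_abs] at h7'
        exact h7'
      refine h7.trans (integral_mono ?_ ((hfD.sub (integrable_const c)).abs) ?_)
      · exact ((hfD.sub (integrable_const c)).bdd_mul hζxm.aestronglyMeasurable (Filter.Eventually.of_forall hζabs)).abs
      · intro z
        show |ζ (pscale ν (x - z)) * (f z - c)| ≤ |f z - c|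
        rw [abs_mul]
        have := hζabs z
        rw [Real.norm_eq_abs] at this
        exact mul_le_of_le_one_left (abs_nonneg _) this
    have hBMO2 := hBMO y hy (2 * ν) (by linarith) hdiam
    rw [← hcdef, ← hμDdef] at hBMO2
    have hmassR : (μD Set.univ).toReal ≤ M₀ * (2 * ν) ^ (n + 1) := by
      rw [hμDuniv]
      exact ENNReal.toReal_le_of_le_ofReal (by positivity) hDup
    have hmass_pos : 0 < (μD Set.univ).toReal := by
      have hb1 : b ≤ (μD Set.univ).toReal := by
        rw [hbD]
        calc ∫ w, ζ (pscale ν (x - w)) ∂μD ≤ ∫ _w, (1 : ℝ) ∂μD :=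
              integral_mono hζiD (integrable_const _) fun w => (hζ01 _).2
          _ = (μD Set.univ).toReal := by simp [measureReal_def]
      linarith
    have hintabs : ∫ z, |f z - c| ∂μD ≤ (μD Set.univ).toReal * B := by
      rw [average_eq, measureReal_def] at hBMO2
      have h8 := mul_le_mul_of_nonneg_left hBMO2 hmass_pos.le
      rw [smul_eq_mul, ← mul_assoc, mul_inv_cancel₀ hmass_pos.ne', one_mul] at h8
      exact h8
    have hfinal : |(∫ z in S, b⁻¹ * ζ (pscale ν (x - z)) * f z ∂σ) - c| ≤
        β⁻¹ * ((M₀ * (2 * ν) ^ (n + 1)) * B) := by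
      rw [hident, abs_mul, abs_of_pos (inv_pos.mpr hbpos)]
      have h9 : b⁻¹ * |∫ z, ζ (pscale ν (x - z)) * (f z - c) ∂μD| ≤
          b⁻¹ * ((M₀ * (2 * ν) ^ (n + 1)) * B) := by
        apply mul_le_mul_of_nonneg_left _ (inv_pos.mpr hbpos).le
        refine (habs.trans hintabs).trans ?_
        exact mul_le_mul_of_nonneg_right hmassR hB
      refine h9.trans ?_
      apply mul_le_mul_of_nonneg_right _ (by positivity)
      exact inv_anti₀ hβ hblow.le
    refine hfinal.trans (le_of_eq ?_)
    rw [hβdef, hρ₀def, hCdef]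
    rw [div_pow, mul_pow, mul_pow]
    field_simp
    ring
  -- wrap-up: average the pointwise bound
  set μQ : Measure (EuclideanSpace ℝ (Fin n) × ℝ) := σ.restrict (pQ y r ∩ S) with hμQdef
  have hμQuniv : μQ Set.univ = σ (pQ y r ∩ S) := by
    rw [hμQdef, Measure.restrict_apply MeasurableSet.univ, Set.univ_inter]
  have hQD : pQ y r ⊆ pQ y (2 * ν) := pQ_subset y hr.le (by linarith)
  have hμQfin : μQ Set.univ < ⊤ := by
    rw [hμQuniv]
    exact lt_of_le_of_lt (measure_mono (Set.inter_subset_inter hQD (subset_refl S))) hDfin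
  haveI : IsFiniteMeasure μQ := ⟨hμQfin⟩
  have hae : ∀ᵐ x ∂μQ, x ∈ V ∩ pQ y r := by
    rw [MeasureTheory.ae_iff]
    refine measure_mono_null (t := (V ∩ pQ y r)ᶜ) (fun x hx => hx) ?_
    rw [hμQdef, Measure.restrict_apply (hVopen.inter (isOpen_pQ y r)).measurableSet.compl]
    have hempty : (V ∩ pQ y r)ᶜ ∩ (pQ y r ∩ S) = ∅ := by
      rw [Set.eq_empty_iff_forall_notMem]
      rintro x ⟨hxc, hxQ, hxS⟩
      exact hxc ⟨hQV ⟨hxQ, hxS⟩, hxQ⟩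
    rw [hempty, measure_empty]
  have hCB : 0 ≤ C * B := mul_nonneg hC.le hB
  rw [average_eq, smul_eq_mul]
  by_cases hgi : Integrable (fun x => |(∫ z in S, (∫ w in S, ζ (pscale ν (x - w)) ∂σ)⁻¹ *
      ζ (pscale ν (x - z)) * f z ∂σ) - c|) μQ
  · have h1 : (∫ x, |(∫ z in S, (∫ w in S, ζ (pscale ν (x - w)) ∂σ)⁻¹ *
        ζ (pscale ν (x - z)) * f z ∂σ) - c| ∂μQ) ≤ (μQ Set.univ).toReal * (C * B) := by
      calc (∫ x, |(∫ z in S, (∫ w in S, ζ (pscale ν (x - w)) ∂σ)⁻¹ *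
            ζ (pscale ν (x - z)) * f z ∂σ) - c| ∂μQ) ≤ ∫ _x, C * B ∂μQ :=
            integral_mono_ae hgi (integrable_const _)
              (hae.mono fun x hx => key x hx.1 hx.2)
        _ = (μQ Set.univ).toReal * (C * B) := by rw [integral_const, smul_eq_mul, measureReal_def]
    calc (μQ Set.univ).toReal⁻¹ * (∫ x, |(∫ z in S, (∫ w in S, ζ (pscale ν (x - w)) ∂σ)⁻¹ *
          ζ (pscale ν (x - z)) * f z ∂σ) - c| ∂μQ) ≤
        (μQ Set.univ).toReal⁻¹ * ((μQ Set.univ).toReal * (C * B)) :=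
          mul_le_mul_of_nonneg_left h1 (inv_nonneg.mpr ENNReal.toReal_nonneg)
      _ ≤ C * B := by
          rcases eq_or_lt_of_le (ENNReal.toReal_nonneg (a := μQ Set.univ)) with h0 | h0
          · rw [← h0]
            simp [hCB]
          · rw [← mul_assoc, inv_mul_cancel₀ h0.ne', one_mul]
  · rw [integral_undef hgi]
    simpa using hCB
end
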